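/- For all integers n ≥ 1 and 1 ≤ k ≤ n−1, the 2-dimension of the poset Q^n_{1,k} of subsets of {1,…,n} of cardinality 1 or k (ordered by inclusion) and the 2-dimension of the poset Q^n_{[0,k]} of subsets of {1,…,n} of cardinality at most k (ordered by inclusion) are both equal to N₂(n, k+1), the minimum cardinality of a (k+1)-suitable family of subsets of {1,…,n}. -/

import Mathlib

/-- The 2-dimension of a poset `P`: the least `d` such that there is an order
embedding of `P` into the powerset of `{1,…,d}` ordered by inclusion. -/
noncomputable def dim2 (P : Type*) [PartialOrder P] : ℕ :=
  sInf {d : ℕ | ∃ f : P → Finset (Fin d), ∀ a b : P, (f a ⊆ f b ↔ a ≤ b)}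

/-- A family `S` of subsets of `{1,…,n}` (modelled as `Fin n`) is a `k`-suitable family
if for every pointed `k`-subset `(A, a)` there is `B ∈ S` with `A ∩ B = {a}`. -/
def IsSuitableFamily (n k : ℕ) (S : Finset (Finset (Fin n))) : Prop :=
  ∀ A : Finset (Fin n), A.card = k → ∀ a ∈ A, ∃ B ∈ S, A ∩ B = {a}

/-- `N₂(n, k)`: the minimum cardinality of a `k`-suitable family of subsets of `{1,…,n}`. -/
noncomputable def suitableNumber2 (n k : ℕ) : ℕ :=
  sInf {m : ℕ | ∃ S : Finset (Finset (Fin n)), IsSuitableFamily n k S ∧ S.card = m}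

/-- From a `(k+1)`-suitable family of size `d`, an embedding of `Q^n_{[0,k]}`
into the powerset of a `d`-element set. -/
lemma embed_of_suitable (n k : ℕ) (hk : k + 1 ≤ n) (S : Finset (Finset (Fin n)))
    (hS : IsSuitableFamily n (k + 1) S) :
    ∃ f : {A : Finset (Fin n) // A.card ≤ k} → Finset (Fin S.card),
      ∀ a b, f a ⊆ f b ↔ a ≤ b := by
  classical
  let e := S.equivFin
  refine ⟨fun A => Finset.univ.filter
      (fun i => ((A : Finset (Fin n)) ∩ ((e.symm i : S) : Finset (Fin n))).Nonempty), ?_⟩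
  intro A B
  constructor
  · intro h
    show (A : Finset (Fin n)) ⊆ B
    by_contra hAB
    obtain ⟨a, haA, haB⟩ := Finset.not_subset.mp hAB
    -- extend B ∪ {a} to a set C of card k+1
    have hcard : (insert a (B : Finset (Fin n))).card ≤ k + 1 := by
      calc (insert a (B : Finset (Fin n))).card ≤ (B : Finset (Fin n)).card + 1 :=
            Finset.card_insert_le _ _
        _ ≤ k + 1 := by exact Nat.add_le_add_right B.2 1
    obtain ⟨C, hBC, -, hCcard⟩ := Finset.exists_subsuperset_card_eq
      (Finset.subset_univ (insert a (B : Finset (Fin n)))) hcard (by simpa using hk)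
    have haC : a ∈ C := hBC (Finset.mem_insert_self a _)
    obtain ⟨B', hB'S, hB'⟩ := hS C hCcard a haC
    have haB' : a ∈ B' := by
      have : a ∈ C ∩ B' := by rw [hB']; exact Finset.mem_singleton_self a
      exact (Finset.mem_inter.mp this).2
    -- the index of B'
    have hi : e ⟨B', hB'S⟩ ∈ Finset.univ.filter
        (fun i => ((A : Finset (Fin n)) ∩ ((e.symm i : S) : Finset (Fin n))).Nonempty) := by
      simp only [Finset.mem_filter, Finset.mem_univ, true_and, Equiv.symm_apply_apply]
      exact ⟨a, Finset.mem_inter.mpr ⟨haA, haB'⟩⟩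
    have := h hi
    simp only [Finset.mem_filter, Finset.mem_univ, true_and, Equiv.symm_apply_apply] at this
    obtain ⟨x, hx⟩ := this
    rw [Finset.mem_inter] at hx
    have hxC : x ∈ C ∩ B' := Finset.mem_inter.mpr
      ⟨hBC (Finset.mem_insert_of_mem hx.1), hx.2⟩
    rw [hB', Finset.mem_singleton] at hxC
    exact haB (hxC ▸ hx.1)
  · intro h i hi
    simp only [Finset.mem_filter, Finset.mem_univ, true_and] at hi ⊢
    obtain ⟨x, hx⟩ := hi
    rw [Finset.mem_inter] at hx
    exact ⟨x, Finset.mem_inter.mpr ⟨h hx.1, hx.2⟩⟩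

/-- From an embedding of `Q^n_{1,k}` into the powerset of a `d`-element set,
a `(k+1)`-suitable family of size at most `d`. -/
lemma suitable_of_embed (n k : ℕ) (hk1 : 1 ≤ k) (d : ℕ)
    (f : {A : Finset (Fin n) // A.card = 1 ∨ A.card = k} → Finset (Fin d))
    (hf : ∀ a b, f a ⊆ f b ↔ a ≤ b) :
    ∃ S : Finset (Finset (Fin n)), IsSuitableFamily n (k + 1) S ∧ S.card ≤ d := by
  classical
  let g : Fin n → {A : Finset (Fin n) // A.card = 1 ∨ A.card = k} :=
    fun x => ⟨{x}, Or.inl (Finset.card_singleton x)⟩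
  let Bf : Fin d → Finset (Fin n) := fun i => Finset.univ.filter (fun x => i ∈ f (g x))
  refine ⟨Finset.image Bf Finset.univ, ?_, ?_⟩
  · intro A hA a ha
    set A' : Finset (Fin n) := A.erase a with hA'
    have hA'card : A'.card = k := by
      rw [hA', Finset.card_erase_of_mem ha, hA]; omega
    have hnot : ¬ (g a ≤ ⟨A', Or.inr hA'card⟩) := by
      intro hle
      have : ({a} : Finset (Fin n)) ⊆ A' := hle
      exact (Finset.notMem_erase a A) (this (Finset.mem_singleton_self a))
    rw [← hf] at hnot
    obtain ⟨i, hiA, hiA'⟩ := Finset.not_subset.mp hnot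
    refine ⟨Bf i, Finset.mem_image_of_mem Bf (Finset.mem_univ i), ?_⟩
    ext x
    simp only [Finset.mem_inter, Finset.mem_singleton, Bf, Finset.mem_filter,
      Finset.mem_univ, true_and]
    constructor
    · rintro ⟨hxA, hxi⟩
      by_contra hxa
      have hxA' : x ∈ A' := Finset.mem_erase.mpr ⟨hxa, hxA⟩
      have hle : g x ≤ ⟨A', Or.inr hA'card⟩ := by
        show ({x} : Finset (Fin n)) ⊆ A'
        simpa using hxA'
      have := (hf (g x) ⟨A', Or.inr hA'card⟩).mpr hle hxi
      exact hiA' this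
    · rintro rfl
      exact ⟨ha, hiA⟩
  · calc (Finset.image Bf Finset.univ).card ≤ Finset.univ.card := Finset.card_image_le
      _ = d := by simp

/-- `dim₂(Q^n_{1,k}) = dim₂(Q^n_{[0,k]}) = N₂(n, k+1)` for `1 ≤ k ≤ n - 1`. -/
theorem dim2_eq_suitableNumber2 (n k : ℕ) (hn : 1 ≤ n) (hk1 : 1 ≤ k) (hk2 : k ≤ n - 1) :
    dim2 {A : Finset (Fin n) // A.card = 1 ∨ A.card = k} = suitableNumber2 n (k + 1) ∧
      dim2 {A : Finset (Fin n) // A.card ≤ k} = suitableNumber2 n (k + 1) := by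
  classical
  have hk : k + 1 ≤ n := by omega
  set P1 := {A : Finset (Fin n) // A.card = 1 ∨ A.card = k}
  set P2 := {A : Finset (Fin n) // A.card ≤ k}
  set D1 := {d : ℕ | ∃ f : P1 → Finset (Fin d), ∀ a b : P1, (f a ⊆ f b ↔ a ≤ b)}
  set D2 := {d : ℕ | ∃ f : P2 → Finset (Fin d), ∀ a b : P2, (f a ⊆ f b ↔ a ≤ b)}
  set M := {m : ℕ | ∃ S : Finset (Finset (Fin n)), IsSuitableFamily n (k + 1) S ∧ S.card = m}
  -- nonemptiness facts
  have hD1ne : n ∈ D1 := ⟨fun A => (A : Finset (Fin n)), fun a b => Iff.rfl⟩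
  have hD2ne : n ∈ D2 := ⟨fun A => (A : Finset (Fin n)), fun a b => Iff.rfl⟩
  have hMne : (Finset.univ : Finset (Finset (Fin n))).card ∈ M := by
    refine ⟨Finset.univ, ?_, rfl⟩
    intro A hA a ha
    exact ⟨{a}, Finset.mem_univ _, Finset.inter_eq_right.mpr (by simpa using ha)⟩
  -- dim2 P2 ≤ N
  have h1 : dim2 P2 ≤ suitableNumber2 n (k + 1) := by
    obtain ⟨S, hS, hScard⟩ := Nat.sInf_mem (⟨_, hMne⟩ : M.Nonempty)
    obtain ⟨f, hf⟩ := embed_of_suitable n k hk S hS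
    have : suitableNumber2 n (k + 1) ∈ D2 := by
      rw [suitableNumber2]
      show sInf M ∈ D2
      rw [← hScard]
      exact ⟨f, hf⟩
    exact Nat.sInf_le this
  -- dim2 P1 ≤ dim2 P2
  have h2 : dim2 P1 ≤ dim2 P2 := by
    obtain ⟨f, hf⟩ := Nat.sInf_mem (⟨_, hD2ne⟩ : D2.Nonempty)
    refine Nat.sInf_le ?_
    refine ⟨fun A => f ⟨(A : Finset (Fin n)), ?_⟩, ?_⟩
    · rcases A.2 with h | h <;> omega
    · intro a b
      refine (hf _ _).trans ?_
      exact Iff.rfl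
  -- N ≤ dim2 P1
  have h3 : suitableNumber2 n (k + 1) ≤ dim2 P1 := by
    obtain ⟨f, hf⟩ := Nat.sInf_mem (⟨_, hD1ne⟩ : D1.Nonempty)
    obtain ⟨S, hS, hScard⟩ := suitable_of_embed n k hk1 (dim2 P1) f hf
    exact le_trans (Nat.sInf_le ⟨S, hS, rfl⟩) hScard
  exact ⟨le_antisymm (le_trans h2 h1) h3, le_antisymm h1 (le_trans h3 h2)⟩
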